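/- Let k ≥ 2 and G be the graph with vertex set ℕ and edges (n, n+i) for 1 ≤ i ≤ k, with graph groupoid 𝒢, length function ℓ(x,k,y) = 2N(x,k,y)+k, and Borel probability measure μ on P(G) determined by μ(Z(α)) = 2^{−(n+1)} k^{−m} for a finite path α of length m starting at vertex n. Then 𝒢 is not asymptotically expanding in measure: there exists a sequence of measurable sets A_p ⊆ P(G) with 1/(k(k+1)) < μ(A_p) ≤ 1/k such that μ(r(B₁·A_p) \ A_p) → 0 as p → ∞. -/

import Mathlib

open MeasureTheory Set

/-- An algebraic groupoid: a set `G` with a distinguished unit space,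
source and range maps, a (total, but only meaningful on composable pairs)
multiplication and an inverse. -/
structure AlgGroupoid (G : Type*) where
  unitSpace : Set G
  s : G → G
  r : G → G
  mul : G → G → G
  inv : G → G
  s_mem : ∀ γ, s γ ∈ unitSpace
  r_mem : ∀ γ, r γ ∈ unitSpace
  s_unit : ∀ x ∈ unitSpace, s x = x
  r_unit : ∀ x ∈ unitSpace, r x = x
  s_mul : ∀ γ₁ γ₂, s γ₁ = r γ₂ → s (mul γ₁ γ₂) = s γ₂
  r_mul : ∀ γ₁ γ₂, s γ₁ = r γ₂ → r (mul γ₁ γ₂) = r γ₁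
  mul_assoc' : ∀ γ₁ γ₂ γ₃, s γ₁ = r γ₂ → s γ₂ = r γ₃ →
    mul (mul γ₁ γ₂) γ₃ = mul γ₁ (mul γ₂ γ₃)
  unit_mul : ∀ γ, mul (r γ) γ = γ
  mul_unit : ∀ γ, mul γ (s γ) = γ
  s_inv : ∀ γ, s (inv γ) = r γ
  r_inv : ∀ γ, r (inv γ) = s γ
  mul_inv : ∀ γ, mul γ (inv γ) = r γ
  inv_mul : ∀ γ, mul (inv γ) γ = s γ

namespace AlgGroupoid

variable {G : Type*} (𝒢 : AlgGroupoid G)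

/-- `A⁻¹ = {γ⁻¹ : γ ∈ A}`. -/
def invSet (A : Set G) : Set G := 𝒢.inv '' A

/-- `A · B = {γ₁γ₂ : γ₁ ∈ A, γ₂ ∈ B, s(γ₁) = r(γ₂)}`. -/
def mulSet (A B : Set G) : Set G :=
  {γ | ∃ γ₁ ∈ A, ∃ γ₂ ∈ B, 𝒢.s γ₁ = 𝒢.r γ₂ ∧ γ = 𝒢.mul γ₁ γ₂}

/-- `r (K ⋅ A)` for `A` a subset of the unit space. -/
def rMul (K A : Set G) : Set G := 𝒢.r '' {γ | γ ∈ K ∧ 𝒢.s γ ∈ A}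

/-- A length function on a groupoid. -/
structure IsLength (ℓ : G → ℝ) : Prop where
  nonneg : ∀ γ, 0 ≤ ℓ γ
  unit_zero : ∀ x ∈ 𝒢.unitSpace, ℓ x = 0
  inv_eq : ∀ γ, ℓ (𝒢.inv γ) = ℓ γ
  subadd : ∀ γ₁ γ₂, 𝒢.s γ₁ = 𝒢.r γ₂ → ℓ (𝒢.mul γ₁ γ₂) ≤ ℓ γ₁ + ℓ γ₂

/-- A bisection: both source and range maps are injective on it. -/
def IsBisection (K : Set G) : Prop := Set.InjOn 𝒢.s K ∧ Set.InjOn 𝒢.r K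

/-- `ℓ(K) ≤ L`. -/
def lengthLE (ℓ : G → ℝ) (K : Set G) (L : ℝ) : Prop := ∀ γ ∈ K, ℓ γ ≤ L

variable [MeasurableSpace G]

/-- An admissible bisection: the source and range sets are measurable, the induced
bijection `τ_K = r|_K ∘ (s|_K)⁻¹` is a measure-class-preserving measurable
isomorphism (formulated at the level of sets), and `ℓ(K) < ∞`. -/
structure IsAdmissible (ℓ : G → ℝ) (μ : Measure G) (K : Set G) : Prop where
  bisection : 𝒢.IsBisection K
  source_meas : MeasurableSet (𝒢.s '' K)
  range_meas : MeasurableSet (𝒢.r '' K)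
  image_meas : ∀ A : Set G, MeasurableSet A → A ⊆ 𝒢.s '' K → MeasurableSet (𝒢.rMul K A)
  preimage_meas : ∀ B : Set G, MeasurableSet B → B ⊆ 𝒢.r '' K →
    MeasurableSet (𝒢.rMul (𝒢.invSet K) B)
  null_iff : ∀ A : Set G, MeasurableSet A → A ⊆ 𝒢.s '' K →
    (μ (𝒢.rMul K A) = 0 ↔ μ A = 0)
  length_bdd : ∃ L : ℝ, ∀ γ ∈ K, ℓ γ ≤ L

/-- `K` is decomposable: a finite union of admissible bisections. -/
def IsDecomposable (ℓ : G → ℝ) (μ : Measure G) (K : Set G) : Prop :=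
  ∃ (N : ℕ) (Ks : Fin N → Set G),
    (∀ i, 𝒢.IsAdmissible ℓ μ (Ks i)) ∧ K = ⋃ i, Ks i

/-- `K` is unital symmetric `N`-decomposable. -/
def IsUSDecomposable (ℓ : G → ℝ) (μ : Measure G) (N : ℕ) (K : Set G) : Prop :=
  ∃ Ks : Fin N → Set G,
    (∀ i, 𝒢.IsAdmissible ℓ μ (Ks i)) ∧ K = ⋃ i, Ks i ∧
    (∃ i, Ks i = 𝒢.unitSpace) ∧
    (∃ σ : Equiv.Perm (Fin N), ∀ i, 𝒢.invSet (Ks i) = Ks (σ i))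

/-- `𝒢` is asymptotically expanding in measure `μ`. -/
def AsympExpanding (ℓ : G → ℝ) (μ : Measure G) : Prop :=
  ∀ α : ℝ, 0 < α → α ≤ 1 / 2 →
    ∃ (C L : ℝ) (N : ℕ) (K : Set G), 0 < C ∧
      𝒢.IsUSDecomposable ℓ μ N K ∧ lengthLE ℓ K L ∧
      ∀ A : Set G, MeasurableSet A → A ⊆ 𝒢.unitSpace →
        α ≤ (μ A).toReal → (μ A).toReal ≤ 1 / 2 →
        C * (μ A).toReal < (μ (𝒢.rMul K A \ A)).toReal

/-- `Y` is a domain of asymptotic expansion. -/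
def DomainAsympExp (ℓ : G → ℝ) (μ : Measure G) (Y : Set G) : Prop :=
  ∀ α : ℝ, 0 < α → α ≤ 1 / 2 →
    ∃ (C L : ℝ) (N : ℕ) (K : Set G), 0 < C ∧
      𝒢.IsUSDecomposable ℓ μ N K ∧ lengthLE ℓ K L ∧
      ∀ A : Set G, MeasurableSet A → A ⊆ Y →
        α * (μ Y).toReal ≤ (μ A).toReal → (μ A).toReal ≤ (μ Y).toReal / 2 →
        C * (μ A).toReal < (μ ((𝒢.rMul K A \ A) ∩ Y)).toReal

end AlgGroupoid

/-- The ambient groupoid of triples `(x,k,y)` of paths with a lag `k ∈ ℤ`: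
`(x,k,y)(y,l,z) = (x,k+l,z)`, `(x,k,y)⁻¹ = (y,−k,x)`; the graph groupoid is the
subset of shift-equivalent triples. -/
def pathGroupoid (P : Type*) : AlgGroupoid (P × ℤ × P) where
  unitSpace := {p | p.2.1 = 0 ∧ p.2.2 = p.1}
  s := fun p => (p.2.2, 0, p.2.2)
  r := fun p => (p.1, 0, p.1)
  mul := fun p q => (p.1, p.2.1 + q.2.1, q.2.2)
  inv := fun p => (p.2.2, -p.2.1, p.1)
  s_mem := fun _ => ⟨rfl, rfl⟩
  r_mem := fun _ => ⟨rfl, rfl⟩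
  s_unit := by rintro ⟨x, k, y⟩ ⟨h1, h2⟩; simp_all
  r_unit := by rintro ⟨x, k, y⟩ ⟨h1, h2⟩; simp_all
  s_mul := by rintro ⟨x, k, y⟩ ⟨x', k', y'⟩ _; rfl
  r_mul := by rintro ⟨x, k, y⟩ ⟨x', k', y'⟩ _; rfl
  mul_assoc' := by rintro ⟨x, k, y⟩ ⟨x', k', y'⟩ ⟨x'', k'', y''⟩ _ _; simp [add_assoc]
  unit_mul := by rintro ⟨x, k, y⟩; simp
  mul_unit := by rintro ⟨x, k, y⟩; simp
  s_inv := by rintro ⟨x, k, y⟩; rfl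
  r_inv := by rintro ⟨x, k, y⟩; rfl
  mul_inv := by rintro ⟨x, k, y⟩; simp
  inv_mul := by rintro ⟨x, k, y⟩; simp

/-- An infinite path in the graph on `ℕ` with edges `(n, n+i+1)` for `i ∈ Fin k`:
it is determined by its starting vertex and its sequence of jumps. -/
abbrev KPath (k : ℕ) := ℕ × (ℕ → Fin k)

/-- The `j`-th vertex along a path. -/
def vert {k : ℕ} (p : KPath k) (j : ℕ) : ℕ :=
  p.1 + ∑ t ∈ Finset.range j, ((p.2 t : ℕ) + 1)

/-- The `j`-th edge of a path, an edge being a pair (source vertex, jump). -/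
def edgeOf {k : ℕ} (p : KPath k) (j : ℕ) : ℕ × Fin k := (vert p j, p.2 j)

/-- Witnesses for shift equivalence with the given lag. -/
def SEsetK {k : ℕ} (p : KPath k × ℤ × KPath k) : Set ℕ :=
  {N | ∀ i : ℕ, N ≤ i → 0 ≤ (i : ℤ) + p.2.1 ∧
    edgeOf p.1 i = edgeOf p.2.2 ((i : ℤ) + p.2.1).toNat}

/-- Shift equivalence. -/
def SEK {k : ℕ} (p : KPath k × ℤ × KPath k) : Prop := (SEsetK p).Nonempty

/-- The length function `ℓ(x,k,y) = 2·N(x,k,y) + k` on the graph groupoid. -/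
noncomputable def kLen {k : ℕ} (p : KPath k × ℤ × KPath k) : ℝ :=
  2 * ((sInf (SEsetK p) : ℕ) : ℝ) + (p.2.1 : ℝ)

/-- The cylinder set of paths starting at vertex `n` whose first jumps are given
by the word `w`; it corresponds to the finite path of length `w.length` from `n`. -/
def cylK {k : ℕ} (n : ℕ) (w : List (Fin k)) : Set (KPath k) :=
  {p | p.1 = n ∧ ∀ (j : ℕ) (h : j < w.length), p.2 j = w.get ⟨j, h⟩}


section Stmt19Aux

open scoped ENNReal

variable {k : ℕ}

/-- Sum of the jump sizes of a word. -/
def wsum (w : List (Fin k)) : ℕ := (w.map fun a => (a : ℕ) + 1).sum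

@[simp] lemma wsum_nil : wsum ([] : List (Fin k)) = 0 := rfl

@[simp] lemma wsum_cons (a : Fin k) (w : List (Fin k)) :
    wsum (a :: w) = ((a : ℕ) + 1) + wsum w := by simp [wsum]

@[simp] lemma wsum_append (w u : List (Fin k)) :
    wsum (w ++ u) = wsum w + wsum u := by simp [wsum]

lemma wsum_eq_zero {w : List (Fin k)} (h : wsum w = 0) : w = [] := by
  cases w with
  | nil => rfl
  | cons a t => simp [wsum] at h

/-- Words with jump sum `d`. -/
abbrev Wrd (k d : ℕ) := {w : List (Fin k) // wsum w = d}

noncomputable def hh (k d : ℕ) : ℝ≥0∞ :=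
  ∑' w : Wrd k d, ((k : ℝ≥0∞))⁻¹ ^ (w : List (Fin k)).length

lemma hh_zero : hh k 0 = 1 := by
  rw [hh, tsum_eq_single (⟨[], rfl⟩ : Wrd k 0)]
  · simp
  · rintro ⟨b, hb⟩ hne
    exact absurd (Subtype.ext (wsum_eq_zero hb)) hne

def consEquiv (k d : ℕ) (hd : 1 ≤ d) :
    (Σ i : Fin (min d k), Wrd k (d - 1 - (i : ℕ))) ≃ Wrd k d where
  toFun q :=
    match q with
    | ⟨⟨i, hi⟩, ⟨t, ht⟩⟩ => ⟨(⟨i, (lt_min_iff.mp hi).2⟩ : Fin k) :: t, by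
        have h1 := (lt_min_iff.mp hi).1
        have ht' : wsum t = d - 1 - i := ht
        show (i + 1) + wsum t = d
        omega⟩
  invFun w :=
    match w with
    | ⟨[], hw⟩ => absurd hw (by simp; omega)
    | ⟨a :: t, hw⟩ =>
      ⟨⟨(a : ℕ), lt_min_iff.mpr ⟨by simp only [wsum_cons] at hw; omega, a.isLt⟩⟩,
       ⟨t, by
          simp only [wsum_cons] at hw
          show wsum t = d - 1 - (a : ℕ)
          omega⟩⟩
  left_inv := by rintro ⟨⟨i, hi⟩, ⟨t, ht⟩⟩; rfl
  right_inv := by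
    rintro ⟨w, hw⟩
    match w, hw with
    | [], hw => exact absurd hw (by simp; omega)
    | a :: t, hw => rfl

lemma hh_rec {d : ℕ} (hd : 1 ≤ d) :
    hh k d = ∑ i ∈ Finset.range (min d k), (k : ℝ≥0∞)⁻¹ * hh k (d - 1 - i) := by
  rw [hh, ← (consEquiv k d hd).tsum_eq, ENNReal.tsum_sigma', tsum_fintype,
    ← Fin.sum_univ_eq_sum_range]
  refine Finset.sum_congr rfl fun i _ => ?_
  rw [hh, ← ENNReal.tsum_mul_left]
  refine tsum_congr fun w => ?_
  simp only [consEquiv, Equiv.coe_fn_mk, List.length_cons]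
  rw [pow_succ, mul_comm]

lemma hh_le_one (hk1 : 1 ≤ k) : ∀ d, hh k d ≤ 1 := by
  intro d
  induction d using Nat.strong_induction_on with
  | _ d ih =>
    rcases Nat.eq_zero_or_pos d with rfl | hd
    · rw [hh_zero]
    · rw [hh_rec hd]
      calc ∑ i ∈ Finset.range (min d k), (k : ℝ≥0∞)⁻¹ * hh k (d - 1 - i)
          ≤ ∑ _i ∈ Finset.range (min d k), (k : ℝ≥0∞)⁻¹ :=
            Finset.sum_le_sum fun i _ =>
              (mul_le_mul_right (ih _ (by omega)) _).trans_eq (mul_one _)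
        _ = ((min d k : ℕ) : ℝ≥0∞) * (k : ℝ≥0∞)⁻¹ := by
            rw [Finset.sum_const, Finset.card_range, nsmul_eq_mul]
        _ ≤ (k : ℝ≥0∞) * (k : ℝ≥0∞)⁻¹ := by
            gcongr
            exact Nat.cast_le.mpr (min_le_right d k)
        _ = 1 := ENNReal.mul_inv_cancel (by exact_mod_cast hk1.trans_lt' Nat.zero_lt_one |>.ne')
            (by simp)

lemma inv_le_hh (hk1 : 1 ≤ k) : ∀ d, (k : ℝ≥0∞)⁻¹ ≤ hh k d := by
  intro d
  induction d using Nat.strong_induction_on with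
  | _ d ih =>
    rcases Nat.eq_zero_or_pos d with rfl | hd
    · rw [hh_zero]
      exact ENNReal.inv_le_one.mpr (by exact_mod_cast hk1)
    · rw [hh_rec hd]
      rcases le_or_gt d k with hdk | hdk
      · have hmem : d - 1 ∈ Finset.range (min d k) := by
          simp only [Finset.mem_range, lt_min_iff]
          omega
        calc (k : ℝ≥0∞)⁻¹ = (k : ℝ≥0∞)⁻¹ * hh k (d - 1 - (d - 1)) := by
              rw [Nat.sub_self, hh_zero, mul_one]
          _ ≤ _ := Finset.single_le_sum (f := fun i => (k : ℝ≥0∞)⁻¹ * hh k (d - 1 - i))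
              (fun i _ => zero_le) hmem
      · have hmin : min d k = k := min_eq_right hdk.le
        have h1 : ∀ i ∈ Finset.range (min d k),
            (k : ℝ≥0∞)⁻¹ * (k : ℝ≥0∞)⁻¹ ≤ (k : ℝ≥0∞)⁻¹ * hh k (d - 1 - i) :=
          fun i _ => mul_le_mul_right (ih _ (by omega)) _
        have h2 := Finset.sum_le_sum h1
        have h3 : ∑ _i ∈ Finset.range (min d k), (k : ℝ≥0∞)⁻¹ * (k : ℝ≥0∞)⁻¹
            = (k : ℝ≥0∞)⁻¹ := by
          rw [Finset.sum_const, Finset.card_range, hmin, nsmul_eq_mul, ← mul_assoc,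
            ENNReal.mul_inv_cancel (by exact_mod_cast hk1.trans_lt' Nat.zero_lt_one |>.ne')
              (by simp), one_mul]
        exact h3.symm.trans_le h2

lemma measurable_coe_jump (t : ℕ) : Measurable fun x : KPath k => ((x.2 t : ℕ)) :=
  measurable_from_top.comp ((measurable_pi_apply t).comp measurable_snd)

lemma measurable_vert (j : ℕ) : Measurable fun x : KPath k => vert x j := by
  unfold vert
  exact measurable_fst.add <| Finset.measurable_sum _ fun t _ =>
    (measurable_coe_jump t).add measurable_const

lemma measurableSet_start (n : ℕ) : MeasurableSet {x : KPath k | x.1 = n} :=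
  measurable_fst (measurableSet_singleton n)

lemma measurable_cylK (n : ℕ) (w : List (Fin k)) : MeasurableSet (cylK n w) := by
  have h : cylK n w = {x : KPath k | x.1 = n} ∩
      ⋂ j : Fin w.length, {x : KPath k | x.2 (j : ℕ) = w.get j} := by
    ext x
    simp only [cylK, mem_setOf_eq, mem_inter_iff, mem_iInter]
    exact ⟨fun ⟨h1, h2⟩ => ⟨h1, fun j => h2 j j.isLt⟩,
      fun ⟨h1, h2⟩ => ⟨h1, fun j hj => h2 ⟨j, hj⟩⟩⟩
  rw [h]
  exact (measurableSet_start n).inter <| MeasurableSet.iInter fun j =>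
    ((measurable_pi_apply _).comp measurable_snd) (measurableSet_singleton _)

/-- The set of paths that visit `T` and then jump by `1`. -/
def Sset (k T : ℕ) : Set (KPath k) := {x | ∃ j, vert x j = T ∧ (x.2 j : ℕ) = 0}

lemma measurable_Sset (T : ℕ) : MeasurableSet (Sset k T) := by
  have h : Sset k T = ⋃ j : ℕ,
      ({x : KPath k | vert x j = T} ∩ {x : KPath k | (x.2 j : ℕ) = 0}) := by
    ext x; simp [Sset]
  rw [h]
  exact MeasurableSet.iUnion fun j =>
    ((measurable_vert j) (measurableSet_singleton T)).inter
      ((measurable_coe_jump j) (measurableSet_singleton 0))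

lemma wsum_ofFn : ∀ {j : ℕ} (f : Fin j → Fin k),
    wsum (List.ofFn f) = ∑ t : Fin j, ((f t : ℕ) + 1) := by
  intro j
  induction j with
  | zero => intro f; simp
  | succ m ih =>
    intro f
    rw [List.ofFn_succ, wsum_cons, ih, Fin.sum_univ_succ]

lemma wsum_eq_sum_get (w : List (Fin k)) :
    wsum w = ∑ i : Fin w.length, ((w.get i : ℕ) + 1) := by
  conv_lhs => rw [← List.ofFn_get w]
  exact wsum_ofFn _

lemma word_eq_of {x : KPath k} {w w' : List (Fin k)} (hs : wsum w = wsum w')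
    (h1 : ∀ j (h : j < w.length), x.2 j = w.get ⟨j, h⟩)
    (h2 : ∀ j (h : j < w'.length), x.2 j = w'.get ⟨j, h⟩) : w = w' := by
  wlog hle : w.length ≤ w'.length generalizing w w' with H
  · exact (H hs.symm h2 h1 (le_of_not_ge hle)).symm
  have htake : w = w'.take w.length := by
    apply List.ext_getElem (by simp [hle])
    intro i hi1 hi2
    have e1 := h1 i hi1
    have e2 := h2 i (lt_of_lt_of_le hi1 hle)
    simp only [List.get_eq_getElem] at e1 e2
    rw [List.getElem_take, ← e1, ← e2]
  have hcomb : w' = w ++ w'.drop w.length := by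
    conv_lhs => rw [← List.take_append_drop w.length w']
    rw [← htake]
  have hz : wsum (w'.drop w.length) = 0 := by
    have hc := congrArg wsum hcomb
    rw [wsum_append] at hc
    omega
  rw [hcomb, wsum_eq_zero hz, List.append_nil]

lemma vert_cyl {x : KPath k} {n : ℕ} {w : List (Fin k)} (hx : x ∈ cylK n w) :
    vert x w.length = n + wsum w := by
  rw [vert, hx.1, wsum_eq_sum_get, ← Fin.sum_univ_eq_sum_range]
  congr 1
  exact Finset.sum_congr rfl fun i _ => by rw [hx.2 i i.isLt]

lemma cylK_append_subset (n : ℕ) (w u : List (Fin k)) : cylK n (w ++ u) ⊆ cylK n w := by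
  rintro x ⟨hx1, hx2⟩
  refine ⟨hx1, fun j hj => ?_⟩
  have h := hx2 j (by simp only [List.length_append]; omega)
  rw [h]
  simp only [List.get_eq_getElem]
  exact List.getElem_append_left hj

lemma vert_zero (x : KPath k) : vert x 0 = x.1 := by simp [vert]

lemma vert_succ (x : KPath k) (j : ℕ) :
    vert x (j + 1) = vert x j + ((x.2 j : ℕ) + 1) := by
  rw [vert, vert, Finset.sum_range_succ, add_assoc]

lemma Sset_inter_eq (hk0 : 0 < k) {n T : ℕ} (hn : n ≤ T) :
    {x : KPath k | x.1 = n} ∩ Sset k T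
      = ⋃ w : Wrd k (T - n), cylK n ((w : List (Fin k)) ++ [⟨0, hk0⟩]) := by
  ext x
  simp only [mem_inter_iff, mem_setOf_eq, mem_iUnion, Sset]
  constructor
  · rintro ⟨hx1, j, hj, hj0⟩
    have hws : wsum (List.ofFn fun t : Fin j => x.2 t)
        = ∑ t ∈ Finset.range j, ((x.2 t : ℕ) + 1) := by
      rw [wsum_ofFn]
      exact Fin.sum_univ_eq_sum_range (fun t => ((x.2 t : ℕ) + 1)) j
    have hvj : x.1 + ∑ t ∈ Finset.range j, ((x.2 t : ℕ) + 1) = T := hj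
    refine ⟨⟨List.ofFn fun t : Fin j => x.2 t, by omega⟩, hx1, ?_⟩
    intro t ht
    simp only [List.length_append, List.length_ofFn, List.length_cons,
      List.length_nil] at ht
    simp only [List.get_eq_getElem]
    rcases Nat.lt_or_ge t j with hlt | hge
    · rw [List.getElem_append_left (by simpa using hlt)]
      simp [List.getElem_ofFn]
    · have : t = j := by omega
      subst this
      rw [List.getElem_append_right (by simp)]
      simp only [List.length_ofFn]
      refine Fin.ext ?_
      simpa using hj0
  · rintro ⟨⟨w, hw⟩, hx⟩
    have hxw : x ∈ cylK n w := cylK_append_subset n w _ hx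
    refine ⟨hx.1, w.length, ?_, ?_⟩
    · have := vert_cyl hxw
      omega
    · have h := hx.2 w.length (by simp)
      rw [h]
      simp only [List.get_eq_getElem]
      rw [List.getElem_append_right (by simp)]
      simp

lemma Sset_disj (hk0 : 0 < k) (n d : ℕ) :
    Pairwise fun w w' : Wrd k d =>
      Disjoint (cylK n ((w : List (Fin k)) ++ [⟨0, hk0⟩]))
        (cylK n ((w' : List (Fin k)) ++ [⟨0, hk0⟩])) := by
  rintro ⟨w, hw⟩ ⟨w', hw'⟩ hne
  rw [Set.disjoint_left]
  rintro x hx hx'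
  apply hne
  have heq : w ++ [(⟨0, hk0⟩ : Fin k)] = w' ++ [⟨0, hk0⟩] :=
    word_eq_of (by simp [hw, hw']) hx.2 hx'.2
  exact Subtype.ext (by simpa using heq)

lemma meas_slice (μP : Measure (KPath k))
    (hμ : ∀ (n : ℕ) (w : List (Fin k)),
      μP (cylK n w) = (2 : ℝ≥0∞)⁻¹ ^ (n + 1) * ((k : ℝ≥0∞))⁻¹ ^ w.length)
    (hk0 : 0 < k) {n T : ℕ} (hn : n ≤ T) :
    μP ({x : KPath k | x.1 = n} ∩ Sset k T)
      = (2 : ℝ≥0∞)⁻¹ ^ (n + 1) * ((k : ℝ≥0∞)⁻¹ * hh k (T - n)) := by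
  rw [Sset_inter_eq hk0 hn, measure_iUnion (Sset_disj hk0 n (T - n))
    (fun w => measurable_cylK _ _)]
  calc ∑' w : Wrd k (T - n), μP (cylK n ((w : List (Fin k)) ++ [⟨0, hk0⟩]))
      = ∑' w : Wrd k (T - n), (2 : ℝ≥0∞)⁻¹ ^ (n + 1)
          * ((k : ℝ≥0∞)⁻¹ * (k : ℝ≥0∞)⁻¹ ^ (w : List (Fin k)).length) := by
        refine tsum_congr fun w => ?_
        rw [hμ]
        simp only [List.length_append, List.length_cons, List.length_nil, pow_succ]
        ring
    _ = _ := by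
        rw [ENNReal.tsum_mul_left, hh, ENNReal.tsum_mul_left]

lemma meas_Sset (μP : Measure (KPath k))
    (hμ : ∀ (n : ℕ) (w : List (Fin k)),
      μP (cylK n w) = (2 : ℝ≥0∞)⁻¹ ^ (n + 1) * ((k : ℝ≥0∞))⁻¹ ^ w.length)
    (hk0 : 0 < k) (T : ℕ) :
    μP (Sset k T) = ∑ n ∈ Finset.range (T + 1),
      (2 : ℝ≥0∞)⁻¹ ^ (n + 1) * ((k : ℝ≥0∞)⁻¹ * hh k (T - n)) := by
  have hcover : Sset k T = ⋃ n ∈ Finset.range (T + 1),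
      ({x : KPath k | x.1 = n} ∩ Sset k T) := by
    ext x
    simp only [mem_iUnion, Finset.mem_range, mem_inter_iff, mem_setOf_eq, exists_prop]
    constructor
    · intro hx
      have hle : x.1 ≤ T := by
        obtain ⟨j, hj, _⟩ := hx
        rw [← hj]
        exact Nat.le_add_right _ _
      exact ⟨x.1, by omega, rfl, hx⟩
    · rintro ⟨m, _, _, hx⟩
      exact hx
  rw [hcover, measure_biUnion_finset ?_ (fun m _ =>
    (measurableSet_start m).inter (measurable_Sset T))]
  · exact Finset.sum_congr rfl fun m hm =>
      meas_slice μP hμ hk0 (by simp only [Finset.mem_range] at hm; omega)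
  · intro a _ b _ hab
    refine Set.disjoint_left.mpr ?_
    rintro x ⟨hxa, _⟩ ⟨hxb, _⟩
    exact hab (hxa ▸ hxb ▸ rfl)

lemma geom_sum_ennreal : ∀ m : ℕ,
    (∑ n ∈ Finset.range m, (2 : ℝ≥0∞)⁻¹ ^ (n + 1)) + (2 : ℝ≥0∞)⁻¹ ^ m = 1
  | 0 => by simp
  | (m + 1) => by
    have h2 : (2 : ℝ≥0∞)⁻¹ ^ (m + 1) + (2 : ℝ≥0∞)⁻¹ ^ (m + 1) = (2 : ℝ≥0∞)⁻¹ ^ m := by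
      rw [← two_mul, pow_succ, show ((2:ℝ≥0∞)⁻¹ ^ m * 2⁻¹) = 2⁻¹ * 2⁻¹ ^ m from mul_comm _ _,
        ← mul_assoc, ENNReal.mul_inv_cancel (by norm_num) (by norm_num), one_mul]
    rw [Finset.sum_range_succ, add_assoc, h2]
    exact geom_sum_ennreal m

def embK (k : ℕ) : KPath k → KPath k × ℤ × KPath k := fun x => (x, 0, x)

lemma embK_injective : Function.Injective (embK k) := fun a b h => congrArg Prod.fst h

lemma measurable_embK : Measurable (embK k) :=
  measurable_id.prodMk (measurable_const.prodMk measurable_id)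

lemma embK_image_eq (S : Set (KPath k)) :
    embK k '' S = {q : KPath k × ℤ × KPath k | q.1 ∈ S} ∩ ({q | q.2.1 = 0} ∩
      ({q | q.1.1 = q.2.2.1} ∩ ⋂ t : ℕ, {q | q.1.2 t = q.2.2.2 t})) := by
  ext q
  constructor
  · rintro ⟨x, hx, rfl⟩
    exact ⟨hx, rfl, rfl, by simp [embK]⟩
  · rintro ⟨h1, h2, h3, h4⟩
    refine ⟨q.1, h1, ?_⟩
    have hq : q.2.2 = q.1 := Prod.ext h3.symm (funext fun t => by
      simpa using (Set.mem_iInter.mp h4 t).symm)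
    show (q.1, (0 : ℤ), q.1) = q
    exact Prod.ext rfl (Prod.ext h2.symm hq.symm)
  
lemma embK_image_measurable {S : Set (KPath k)} (hS : MeasurableSet S) :
    MeasurableSet (embK k '' S) := by
  rw [embK_image_eq]
  refine (measurable_fst hS).inter (MeasurableSet.inter ?_ (MeasurableSet.inter ?_ ?_))
  · exact (measurable_fst.comp measurable_snd) (measurableSet_singleton 0)
  · exact measurableSet_eq_fun (f := fun q : KPath k × ℤ × KPath k => q.1.1)
      (g := fun q => q.2.2.1) (by fun_prop) (by fun_prop)
  · exact MeasurableSet.iInter fun t =>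
      measurableSet_eq_fun (f := fun q : KPath k × ℤ × KPath k => q.1.2 t)
        (g := fun q => q.2.2.2 t) (by fun_prop) (by fun_prop)

end Stmt19Aux

open MeasureTheory in
/-- for `k ≥ 2`, the graph groupoid of the graph on `ℕ` with edges
`(n, n+i)`, `1 ≤ i ≤ k`, and the measure with `μ(Z(α)) = 2^{-(n+1)} k^{-m}` for a
finite path `α` of length `m` from `n`, is not asymptotically expanding: there are
measurable sets `A_p` with `1/(k(k+1)) < μ(A_p) ≤ 1/k` and
`μ(r(B₁·A_p) \ A_p) → 0`. -/
theorem stmt19 (k : ℕ) (hk : 2 ≤ k) (μP : Measure (KPath k))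
    [IsProbabilityMeasure μP]
    (hμ : ∀ (n : ℕ) (w : List (Fin k)),
      μP (cylK n w) = (2 : ENNReal)⁻¹ ^ (n + 1) * ((k : ENNReal))⁻¹ ^ w.length) :
    ∀ (𝒢 : AlgGroupoid (KPath k × ℤ × KPath k))
      (μ' : Measure (KPath k × ℤ × KPath k)),
      𝒢 = pathGroupoid (KPath k) →
      μ' = Measure.map (fun x => (x, (0 : ℤ), x)) μP →
      ∃ A : ℕ → Set (KPath k × ℤ × KPath k),
        (∀ p : ℕ, MeasurableSet (A p) ∧ A p ⊆ 𝒢.unitSpace ∧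
          1 / ((k : ℝ) * ((k : ℝ) + 1)) < (μ' (A p)).toReal ∧
          (μ' (A p)).toReal ≤ 1 / (k : ℝ)) ∧
        Filter.Tendsto
          (fun p => (μ' (𝒢.rMul {γ | SEK γ ∧ kLen γ ≤ 1} (A p) \ A p)).toReal)
          Filter.atTop (nhds 0) := by
  intro 𝒢 μ' h𝒢 hμ'
  subst h𝒢
  subst hμ'
  have hk0 : 0 < k := by omega
  have hk1 : 1 ≤ k := by omega
  refine ⟨fun p => embK k '' Sset k (p + k), fun p => ?_, ?_⟩
  · -- properties of A p
    set T := p + k with hT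
    have hAmeas : MeasurableSet (embK k '' Sset k T) :=
      embK_image_measurable (measurable_Sset T)
    have hμA : Measure.map (fun x : KPath k => (x, (0 : ℤ), x)) μP (embK k '' Sset k T)
        = μP (Sset k T) := by
      rw [show (fun x : KPath k => (x, (0 : ℤ), x)) = embK k from rfl,
        Measure.map_apply measurable_embK hAmeas,
        Set.preimage_image_eq _ embK_injective]
    have hSval := meas_Sset μP hμ hk0 T
    have hGS1 : (∑ n ∈ Finset.range (T + 1), (2 : ENNReal)⁻¹ ^ (n + 1))
        + (2 : ENNReal)⁻¹ ^ (T + 1) = 1 := geom_sum_ennreal (T + 1)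
    have hGSle : (∑ n ∈ Finset.range (T + 1), (2 : ENNReal)⁻¹ ^ (n + 1)) ≤ 1 :=
      le_self_add.trans_eq hGS1
    have hub : μP (Sset k T) ≤ (k : ENNReal)⁻¹ := by
      rw [hSval]
      calc ∑ n ∈ Finset.range (T + 1), (2 : ENNReal)⁻¹ ^ (n + 1) * ((k : ENNReal)⁻¹ * hh k (T - n))
          ≤ ∑ n ∈ Finset.range (T + 1), (2 : ENNReal)⁻¹ ^ (n + 1) * ((k : ENNReal)⁻¹ * 1) := by
            refine Finset.sum_le_sum fun n _ => ?_
            gcongr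
            exact hh_le_one hk1 _
        _ = (k : ENNReal)⁻¹ * ∑ n ∈ Finset.range (T + 1), (2 : ENNReal)⁻¹ ^ (n + 1) := by
            rw [Finset.mul_sum]
            exact Finset.sum_congr rfl fun n _ => by ring
        _ ≤ (k : ENNReal)⁻¹ * 1 := by gcongr
        _ = (k : ENNReal)⁻¹ := mul_one _
    have hlb : ((k : ENNReal)⁻¹ * (k : ENNReal)⁻¹)
          * ∑ n ∈ Finset.range (T + 1), (2 : ENNReal)⁻¹ ^ (n + 1)
        ≤ μP (Sset k T) := by
      rw [hSval]
      calc ((k : ENNReal)⁻¹ * (k : ENNReal)⁻¹)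
            * ∑ n ∈ Finset.range (T + 1), (2 : ENNReal)⁻¹ ^ (n + 1)
          = ∑ n ∈ Finset.range (T + 1),
              (2 : ENNReal)⁻¹ ^ (n + 1) * ((k : ENNReal)⁻¹ * (k : ENNReal)⁻¹) := by
            rw [Finset.mul_sum]
            exact Finset.sum_congr rfl fun n _ => by ring
        _ ≤ ∑ n ∈ Finset.range (T + 1),
              (2 : ENNReal)⁻¹ ^ (n + 1) * ((k : ENNReal)⁻¹ * hh k (T - n)) := by
            refine Finset.sum_le_sum fun n _ => ?_
            gcongr
            exact inv_le_hh hk1 _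
    have hfin : μP (Sset k T) ≠ ⊤ := measure_ne_top μP _
    have hGSfin : (∑ n ∈ Finset.range (T + 1), (2 : ENNReal)⁻¹ ^ (n + 1)) ≠ ⊤ :=
      (hGSle.trans_lt ENNReal.one_lt_top).ne
    have hGSreal : (∑ n ∈ Finset.range (T + 1), (2 : ENNReal)⁻¹ ^ (n + 1)).toReal
        = 1 - (2 : ℝ)⁻¹ ^ (T + 1) := by
      have h2 := congrArg ENNReal.toReal hGS1
      rw [ENNReal.toReal_add hGSfin (by simp), ENNReal.toReal_one] at h2
      have h3 : ((2 : ENNReal)⁻¹ ^ (T + 1)).toReal = (2 : ℝ)⁻¹ ^ (T + 1) := by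
        simp [ENNReal.toReal_pow, ENNReal.toReal_inv]
      rw [h3] at h2
      linarith
    have hkR : (2 : ℝ) ≤ (k : ℝ) := by exact_mod_cast hk
    have hkR0 : (0 : ℝ) < (k : ℝ) := by positivity
    refine ⟨hAmeas, ?_, ?_, ?_⟩
    · rintro q ⟨x, hx, rfl⟩
      exact ⟨rfl, rfl⟩
    · -- lower bound
      rw [hμA]
      have hmono := ENNReal.toReal_mono hfin hlb
      have hlval : (((k : ENNReal)⁻¹ * (k : ENNReal)⁻¹)
            * ∑ n ∈ Finset.range (T + 1), (2 : ENNReal)⁻¹ ^ (n + 1)).toReal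
          = ((k : ℝ)⁻¹ * (k : ℝ)⁻¹) * (1 - (2 : ℝ)⁻¹ ^ (T + 1)) := by
        rw [ENNReal.toReal_mul, ENNReal.toReal_mul, hGSreal]
        simp [ENNReal.toReal_inv]
      rw [hlval] at hmono
      refine lt_of_lt_of_le ?_ hmono
      -- numeric inequality
      have hs1 : ((k : ℝ) + 1) < 2 ^ (T + 1) := by
        have h1 : k + 1 < 2 ^ (T + 1) :=
          lt_of_lt_of_le (Nat.lt_two_pow_self (n := k + 1))
            (Nat.pow_le_pow_right (by norm_num) (by omega))
        exact_mod_cast h1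
      have hs : (2 : ℝ)⁻¹ ^ (T + 1) * ((k : ℝ) + 1) < 1 := by
        rw [inv_pow, inv_mul_lt_iff₀ (by positivity), mul_one]
        exact hs1
      have hs0 : (0 : ℝ) ≤ (2 : ℝ)⁻¹ ^ (T + 1) := by positivity
      rw [div_lt_iff₀ (by positivity)]
      have hinv : ((k : ℝ)⁻¹ * (k : ℝ)⁻¹) * ((k : ℝ) * (k : ℝ)) = 1 := by
        field_simp
      nlinarith [mul_lt_mul_of_pos_left hs hkR0, sq_nonneg ((k:ℝ))]
    · -- upper bound
      rw [hμA]
      have hmono := ENNReal.toReal_mono (by simp [hk0.ne'] : (k : ENNReal)⁻¹ ≠ ⊤) hub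
      have : ((k : ENNReal)⁻¹).toReal = 1 / (k : ℝ) := by
        simp [ENNReal.toReal_inv, one_div]
      rwa [this] at hmono
  · -- the boundary tends to zero
    have key : ∀ p : ℕ,
        (Measure.map (fun x : KPath k => (x, (0 : ℤ), x)) μP
          ((pathGroupoid (KPath k)).rMul {γ | SEK γ ∧ kLen γ ≤ 1} (embK k '' Sset k (p + k))
            \ embK k '' Sset k (p + k))).toReal ≤ ((1 : ℝ) / 2) ^ (p + k + 2) := by
      intro p
      set T := p + k with hT
      have hsub : (pathGroupoid (KPath k)).rMul {γ | SEK γ ∧ kLen γ ≤ 1}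
            (embK k '' Sset k T) \ embK k '' Sset k T
          ⊆ {q : KPath k × ℤ × KPath k | q.1.1 = T + 1} := by
        rintro q ⟨hq1, hq2⟩
        obtain ⟨γ, hγ, rfl⟩ := hq1
        obtain ⟨⟨hSE, hLen⟩, hγs⟩ := hγ
        obtain ⟨x, m, y⟩ := γ
        have hy : y ∈ Sset k T := by
          obtain ⟨u, hu, hueq⟩ := hγs
          have huy : u = y := congrArg Prod.fst hueq
          rwa [← huy]
        have hx : x ∉ Sset k T := fun hxS => hq2 ⟨x, hxS, rfl⟩
        have hNmem : sInf (SEsetK ((x, m, y) : KPath k × ℤ × KPath k))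
            ∈ SEsetK ((x, m, y) : KPath k × ℤ × KPath k) := Nat.sInf_mem hSE
        set N := sInf (SEsetK ((x, m, y) : KPath k × ℤ × KPath k)) with hNdef
        have hlen' : 2 * (N : ℝ) + (m : ℝ) ≤ 1 := hLen
        have hlenZ : 2 * (N : ℤ) + m ≤ 1 := by exact_mod_cast hlen'
        have hNm : 0 ≤ (N : ℤ) + m := (hNmem N le_rfl).1
        have hcase : (N = 0 ∧ m = 0) ∨ (N = 0 ∧ m = 1) ∨ (N = 1 ∧ m = -1) := by omega
        rcases hcase with ⟨hN0, hm0⟩ | ⟨hN0, hm1⟩ | ⟨hN1, hm1⟩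
        · exfalso
          apply hx
          have he : ∀ i : ℕ, edgeOf x i = edgeOf y i := by
            intro i
            have h := (hNmem i (by omega)).2
            rw [hm0] at h
            have ht : ((i : ℤ) + 0).toNat = i := by omega
            rwa [ht] at h
          have h1 : x.1 = y.1 := by
            have h0 := congrArg Prod.fst (he 0)
            simpa [edgeOf, vert_zero] using h0
          have h2 : x.2 = y.2 := funext fun i => congrArg Prod.snd (he i)
          have hxy : x = y := Prod.ext h1 h2
          rwa [hxy]
        · -- m = 1
          have he : ∀ i : ℕ, edgeOf x i = edgeOf y (i + 1) := by
            intro i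
            have h := (hNmem i (by omega)).2
            rw [hm1] at h
            have ht : ((i : ℤ) + 1).toNat = i + 1 := by omega
            rwa [ht] at h
          obtain ⟨j, hj, hj0⟩ := hy
          rcases j with _ | j'
          · show x.1 = T + 1
            have h1 : vert x 0 = vert y 1 := congrArg Prod.fst (he 0)
            rw [vert_zero, vert_succ, vert_zero] at h1
            rw [vert_zero] at hj
            omega
          · exfalso
            apply hx
            refine ⟨j', ?_, ?_⟩
            · have h1 : vert x j' = vert y (j' + 1) := congrArg Prod.fst (he j')
              rw [h1]
              exact hj
            · have h2 : x.2 j' = y.2 (j' + 1) := congrArg Prod.snd (he j')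
              rw [h2]
              exact hj0
        · -- m = -1
          exfalso
          apply hx
          obtain ⟨j, hj, hj0⟩ := hy
          have h := (hNmem (j + 1) (by omega)).2
          rw [hm1] at h
          have ht : (((j + 1 : ℕ) : ℤ) + (-1)).toNat = j := by omega
          rw [ht] at h
          refine ⟨j + 1, ?_, ?_⟩
          · have h1 : vert x (j + 1) = vert y j := congrArg Prod.fst h
            rw [h1]
            exact hj
          · have h2 : x.2 (j + 1) = y.2 j := congrArg Prod.snd h
            rw [h2]
            exact hj0
      have hDmeas : MeasurableSet {q : KPath k × ℤ × KPath k | q.1.1 = T + 1} :=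
        measurable_fst.fst (measurableSet_singleton (T + 1))
      have hDμ : Measure.map (fun x : KPath k => (x, (0 : ℤ), x)) μP
          {q : KPath k × ℤ × KPath k | q.1.1 = T + 1} = (2 : ENNReal)⁻¹ ^ (T + 2) := by
        rw [show (fun x : KPath k => (x, (0 : ℤ), x)) = embK k from rfl,
          Measure.map_apply measurable_embK hDmeas]
        have hpre : (embK k) ⁻¹' {q : KPath k × ℤ × KPath k | q.1.1 = T + 1}
            = cylK (T + 1) ([] : List (Fin k)) := by
          ext x
          simp [embK, cylK]
        rw [hpre, hμ]
        simp
      have hle := (measure_mono hsub).trans_eq hDμ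
      have hmono := ENNReal.toReal_mono (by simp) hle
      have hval : ((2 : ENNReal)⁻¹ ^ (T + 2)).toReal = ((1 : ℝ) / 2) ^ (T + 2) := by
        simp [ENNReal.toReal_pow, ENNReal.toReal_inv, one_div]
      rw [hval] at hmono
      calc _ ≤ ((1 : ℝ) / 2) ^ (T + 2) := hmono
        _ ≤ ((1 : ℝ) / 2) ^ (p + k + 2) := le_of_eq (by rw [hT])
    have h0 : Filter.Tendsto (fun p : ℕ => ((1 : ℝ) / 2) ^ p) Filter.atTop (nhds 0) :=
      tendsto_pow_atTop_nhds_zero_of_lt_one (by norm_num) (by norm_num)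
    have h1 : Filter.Tendsto (fun p : ℕ => ((1 : ℝ) / 2) ^ (p + k + 2))
        Filter.atTop (nhds 0) := by
      have h2 := h0.const_mul (((1 : ℝ) / 2) ^ (k + 2))
      simp only [mul_zero] at h2
      refine h2.congr fun p => ?_
      rw [← pow_add]
      ring_nf
    exact squeeze_zero (fun p => ENNReal.toReal_nonneg) key h1
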